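/- Let s > 0, Q > 0, R' > 0, C₀ > 0, T₀ ≥ 1. Let σ ∈ L²(ℝ³) with ∫_{ℝ³} (1+|ξ|²)^s |σ̂(ξ)|² dξ ≤ Q², and suppose that for some ε ∈ (0,1), for every ξ ∈ ℝ³ and every t ≥ T₀ one has |σ̂(ξ)| ≤ C₀( e^{2(t+|ξ|)R'} (1 + |ξ|/t) ε + (1+|ξ|⁴)/t² ). Then there exist constants C > 0 and ε₀ ∈ (0,1), depending only on s, Q, R', C₀, T₀, such that if ε ∈ (0, ε₀) then ‖σ‖_{L²(ℝ³)} ≤ C (−log ε)^{−4s/(11+2s)}. -/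

import Mathlib

/-!
STATEMENT 1: Stability from a pointwise Fourier bound.  Let `σ ∈ L²(ℝ³)` and let
`σ̂` be its Fourier transform (normalized so that Plancherel reads
`∫ |σ̂|² = (2π)³ ‖σ‖²_{L²}`), with `∫ (1+|ξ|²)^s |σ̂|² ≤ Q²`.  If for some
`ε ∈ (0,1)` one has, for all `ξ` and all `t ≥ T₀`,
`|σ̂(ξ)| ≤ C₀(e^{2(t+|ξ|)R'}(1+|ξ|/t) ε + (1+|ξ|⁴)/t²)`, then there are
`C > 0`, `ε₀ ∈ (0,1)` depending only on `s, Q, R', C₀, T₀` with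
`‖σ‖_{L²} ≤ C (−log ε)^{−4s/(11+2s)}` whenever `ε ∈ (0, ε₀)`.
-/

open MeasureTheory Metric
set_option maxHeartbeats 2000000

noncomputable section

abbrev E3 := EuclideanSpace ℝ (Fin 3)

lemma pow4_le_exp {β : ℝ} (hβ : 120 ≤ β) : β ^ 4 ≤ Real.exp β := by
  have h0 : (0:ℝ) ≤ β := by linarith
  have h := Real.pow_div_factorial_le_exp (x := β) h0 5
  norm_num [Nat.factorial] at h
  nlinarith [pow_nonneg h0 4]

theorem stmt1 (s Q R' C₀ T₀ : ℝ) (hs : 0 < s) (hQ : 0 < Q) (hR' : 0 < R')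
    (hC₀ : 0 < C₀) (hT₀ : 1 ≤ T₀) :
    ∃ C ε₀ : ℝ, 0 < C ∧ ε₀ ∈ Set.Ioo (0 : ℝ) 1 ∧
      ∀ (σ : E3 → ℝ) (σhat : E3 → ℂ) (ε : ℝ),
        -- σ ∈ L²(ℝ³)
        MemLp σ 2 (volume : Measure E3) →
        Measurable σhat →
        -- σ̂ is the L² Fourier transform of σ: Plancherel identity
        (∫ ξ : E3, ‖σhat ξ‖ ^ 2) = (2 * Real.pi) ^ 3 * ∫ x : E3, (σ x) ^ 2 →
        -- Sobolev bound  ∫ (1+|ξ|²)^s |σ̂|² ≤ Q²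
        Integrable (fun ξ : E3 => (1 + ‖ξ‖ ^ 2) ^ s * ‖σhat ξ‖ ^ 2)
          (volume : Measure E3) →
        (∫ ξ : E3, (1 + ‖ξ‖ ^ 2) ^ s * ‖σhat ξ‖ ^ 2) ≤ Q ^ 2 →
        ε ∈ Set.Ioo (0 : ℝ) ε₀ →
        -- the pointwise bound on σ̂
        (∀ ξ : E3, ∀ t : ℝ, T₀ ≤ t →
          ‖σhat ξ‖ ≤ C₀ * (Real.exp (2 * (t + ‖ξ‖) * R') * (1 + ‖ξ‖ / t) * ε
            + (1 + ‖ξ‖ ^ 4) / t ^ 2)) →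
        Real.sqrt (∫ x : E3, (σ x) ^ 2)
          ≤ C * (-Real.log ε) ^ (-(4 * s / (11 + 2 * s))) := by
  have h11 : (0:ℝ) < 11 + 2 * s := by linarith
  set θ : ℝ := 4 / (11 + 2 * s) with hθdef
  have hθpos : 0 < θ := by positivity
  have hθlt : θ < 1 := by rw [hθdef, div_lt_one h11]; linarith
  have h1θ : 0 < 1 - θ := by linarith
  have hVfin : volume (ball (0:E3) 1) < ⊤ := measure_ball_lt_top
  set V : ℝ := (volume (ball (0:E3) 1)).toReal with hVdef
  have hVpos : 0 < V :=
    ENNReal.toReal_pos (measure_ball_pos volume 0 one_pos).ne' hVfin.ne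
  set K : ℝ := 8 * C₀ ^ 2 * V + 32768 * C₀ ^ 2 * R' ^ 4 * V + Q ^ 2 with hKdef
  have hKpos : 0 < K := by positivity
  set β₀ : ℝ := max 120 (max (8 * R' * T₀) ((8 * R') ^ (1 / (1 - θ)))) with hβ₀def
  have hβ₀120 : (120:ℝ) ≤ β₀ := le_max_left _ _
  have hpi : (0:ℝ) < 2 * Real.pi := by positivity
  refine ⟨Real.sqrt (K / (2 * Real.pi) ^ 3), Real.exp (-β₀),
    Real.sqrt_pos.mpr (by positivity), ⟨Real.exp_pos _,
      Real.exp_lt_one_iff.mpr (by linarith)⟩, ?_⟩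
  intro σ σhat ε hσL2 hmeas hplanch hintS hsob hε hpt
  obtain ⟨hε0, hεβ⟩ := hε
  set β : ℝ := -Real.log ε with hβdef
  have hβgt : β₀ < β := by
    have h := Real.log_lt_log hε0 hεβ
    rw [Real.log_exp] at h
    simp only [hβdef]; linarith
  have hβ120 : (120:ℝ) ≤ β := le_of_lt (lt_of_le_of_lt hβ₀120 hβgt)
  have hβ1 : (1:ℝ) ≤ β := by linarith
  have hβpos : (0:ℝ) < β := by linarith
  have hεexp : ε = Real.exp (-β) := by
    rw [hβdef, neg_neg, Real.exp_log hε0]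
  set t : ℝ := β / (8 * R') with htdef
  have htpos : 0 < t := by positivity
  have htT₀ : T₀ ≤ t := by
    have h1 : 8 * R' * T₀ ≤ β₀ := le_trans (le_max_left _ _) (le_max_right _ _)
    rw [htdef, le_div_iff₀ (by positivity)]
    calc T₀ * (8 * R') = 8 * R' * T₀ := by ring
      _ ≤ β₀ := h1
      _ ≤ β := hβgt.le
  set ρ : ℝ := β ^ θ with hρdef
  have hρ1 : (1:ℝ) ≤ ρ := Real.one_le_rpow hβ1 hθpos.le
  have hρpos : (0:ℝ) < ρ := by linarith
  have hρt : ρ ≤ t := by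
    have h8 : (8 * R') ^ (1 / (1 - θ)) ≤ β₀ :=
      le_trans (le_max_right _ _) (le_max_right _ _)
    have e1 : ((8 * R') ^ (1 / (1 - θ))) ^ (1 - θ) = 8 * R' := by
      rw [← Real.rpow_mul (by positivity), one_div, inv_mul_cancel₀ h1θ.ne',
        Real.rpow_one]
    have h2 : 8 * R' ≤ β ^ (1 - θ) := by
      rw [← e1]
      exact Real.rpow_le_rpow (Real.rpow_nonneg (by positivity) _)
        (le_trans h8 hβgt.le) h1θ.le
    have h3 : ρ * (8 * R') ≤ β := by
      calc ρ * (8 * R') ≤ β ^ θ * β ^ (1 - θ) :=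
            mul_le_mul_of_nonneg_left h2 (Real.rpow_nonneg hβpos.le _)
        _ = β := by
            rw [← Real.rpow_add hβpos]
            norm_num
    rw [htdef, le_div_iff₀ (by positivity)]; linarith
  -- the pointwise bound on the ball of radius ρ
  set M : ℝ := C₀ * (2 * Real.exp (-(β / 2)) + 128 * R' ^ 2 * ρ ^ 4 / β ^ 2)
    with hMdef
  have hMpt : ∀ ξ : E3, ‖ξ‖ ≤ ρ → ‖σhat ξ‖ ≤ M := by
    intro ξ hξ
    have hξ0 : (0:ℝ) ≤ ‖ξ‖ := norm_nonneg ξ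
    have h1 := hpt ξ t htT₀
    have hexp : Real.exp (2 * (t + ‖ξ‖) * R') ≤ Real.exp (β / 2) := by
      apply Real.exp_le_exp.mpr
      have ht4 : 4 * t * R' = β / 2 := by
        rw [htdef]; field_simp; ring
      have h5 : R' * ‖ξ‖ ≤ R' * t := mul_le_mul_of_nonneg_left (le_trans hξ hρt) hR'.le
      calc 2 * (t + ‖ξ‖) * R' = 4 * t * R' - 2 * (R' * t - R' * ‖ξ‖) := by ring
        _ ≤ 4 * t * R' := by linarith
        _ = β / 2 := ht4
    have hfrac : 1 + ‖ξ‖ / t ≤ 2 := by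
      have : ‖ξ‖ / t ≤ 1 := (div_le_one htpos).mpr (le_trans hξ hρt)
      linarith
    have hterm1 : Real.exp (2 * (t + ‖ξ‖) * R') * (1 + ‖ξ‖ / t) * ε
        ≤ 2 * Real.exp (-(β / 2)) := by
      calc Real.exp (2 * (t + ‖ξ‖) * R') * (1 + ‖ξ‖ / t) * ε
          ≤ Real.exp (β / 2) * 2 * ε := by
            apply mul_le_mul_of_nonneg_right _ hε0.le
            exact mul_le_mul hexp hfrac (by positivity) (Real.exp_pos _).le
        _ = 2 * (Real.exp (β / 2) * Real.exp (-β)) := by rw [hεexp]; ring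
        _ = 2 * Real.exp (-(β / 2)) := by
            rw [← Real.exp_add]; congr 1; ring
    have hterm2 : (1 + ‖ξ‖ ^ 4) / t ^ 2 ≤ 128 * R' ^ 2 * ρ ^ 4 / β ^ 2 := by
      have h4 : ‖ξ‖ ^ 4 ≤ ρ ^ 4 := pow_le_pow_left₀ hξ0 hξ 4
      have hρ4 : (1:ℝ) ≤ ρ ^ 4 := one_le_pow₀ hρ1
      have ht2 : t ^ 2 = β ^ 2 / (64 * R' ^ 2) := by
        rw [htdef]; field_simp; ring
      rw [ht2, div_div_eq_mul_div]
      gcongr ?_ / _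
      calc (1 + ‖ξ‖ ^ 4) * (64 * R' ^ 2) ≤ (2 * ρ ^ 4) * (64 * R' ^ 2) := by
            apply mul_le_mul_of_nonneg_right (by linarith) (by positivity)
        _ = 128 * R' ^ 2 * ρ ^ 4 := by ring
    calc ‖σhat ξ‖ ≤ C₀ * (Real.exp (2 * (t + ‖ξ‖) * R') * (1 + ‖ξ‖ / t) * ε
            + (1 + ‖ξ‖ ^ 4) / t ^ 2) := h1
      _ ≤ M := by
          rw [hMdef]
          exact mul_le_mul_of_nonneg_left (add_le_add hterm1 hterm2) hC₀.le
  -- integrability of |σhat|²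
  have hone : ∀ ξ : E3, (1:ℝ) ≤ (1 + ‖ξ‖ ^ 2) ^ s := fun ξ =>
    Real.one_le_rpow (le_add_of_nonneg_right (sq_nonneg ‖ξ‖)) hs.le
  have hf_meas : Measurable fun ξ : E3 => ‖σhat ξ‖ ^ 2 :=
    (hmeas.norm).pow_const 2
  have hf_int : Integrable (fun ξ : E3 => ‖σhat ξ‖ ^ 2) := by
    apply hintS.mono' hf_meas.aestronglyMeasurable
    filter_upwards with ξ
    rw [Real.norm_eq_abs, abs_of_nonneg (by positivity)]
    calc ‖σhat ξ‖ ^ 2 = 1 * ‖σhat ξ‖ ^ 2 := (one_mul _).symm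
      _ ≤ (1 + ‖ξ‖ ^ 2) ^ s * ‖σhat ξ‖ ^ 2 :=
        mul_le_mul_of_nonneg_right (hone ξ) (by positivity)
  set B : Set E3 := closedBall (0:E3) ρ with hBdef
  have hBmeas : MeasurableSet B := measurableSet_closedBall
  have hsplit : (∫ ξ : E3, ‖σhat ξ‖ ^ 2)
      = (∫ ξ in B, ‖σhat ξ‖ ^ 2) + ∫ ξ in Bᶜ, ‖σhat ξ‖ ^ 2 :=
    (integral_add_compl hBmeas hf_int).symm
  -- low frequencies
  have hBvol : (volume B).toReal = ρ ^ 3 * V := by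
    rw [hBdef, Measure.addHaar_closedBall volume 0 (le_of_lt hρpos)]
    rw [finrank_euclideanSpace_fin, ENNReal.toReal_mul,
      ENNReal.toReal_ofReal (by positivity)]
  have hM0 : 0 ≤ M := le_trans (norm_nonneg (σhat 0))
    (hMpt 0 (by simp [hρpos.le]))
  have hlow : (∫ ξ in B, ‖σhat ξ‖ ^ 2) ≤ M ^ 2 * (ρ ^ 3 * V) := by
    calc (∫ ξ in B, ‖σhat ξ‖ ^ 2) ≤ ∫ _ξ in B, M ^ 2 := by
          apply setIntegral_mono_on hf_int.integrableOn
            (integrableOn_const measure_closedBall_lt_top.ne) hBmeas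
          intro ξ hξ
          have hξρ : ‖ξ‖ ≤ ρ := by
            simpa [hBdef, Metric.mem_closedBall, dist_zero_right] using hξ
          exact pow_le_pow_left₀ (norm_nonneg _) (hMpt ξ hξρ) 2
      _ = M ^ 2 * (ρ ^ 3 * V) := by
          rw [setIntegral_const, smul_eq_mul, Measure.real, hBvol]; ring
  -- high frequencies
  set A : ℝ := β ^ (-(2 * s * θ)) with hAdef
  have hA0 : 0 ≤ A := Real.rpow_nonneg hβpos.le _
  have hhigh : (∫ ξ in Bᶜ, ‖σhat ξ‖ ^ 2) ≤ A * Q ^ 2 := by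
    have hptw : ∀ ξ : E3, ξ ∈ Bᶜ →
        ‖σhat ξ‖ ^ 2 ≤ A * ((1 + ‖ξ‖ ^ 2) ^ s * ‖σhat ξ‖ ^ 2) := by
      intro ξ hξ
      have hξρ : ρ ≤ ‖ξ‖ := by
        simp only [hBdef, Set.mem_compl_iff, Metric.mem_closedBall,
          dist_zero_right, not_le] at hξ
        linarith
      have h2 : β ^ (2 * s * θ) ≤ (1 + ‖ξ‖ ^ 2) ^ s := by
        have e1 : β ^ (2 * s * θ) = (ρ ^ 2) ^ s := by
          rw [hρdef, ← Real.rpow_natCast (β ^ θ) 2, ← Real.rpow_mul hβpos.le,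
            ← Real.rpow_mul hβpos.le]
          norm_num; ring_nf
        rw [e1]
        have hsq : ρ ^ 2 ≤ ‖ξ‖ ^ 2 := pow_le_pow_left₀ hρpos.le hξρ 2
        exact Real.rpow_le_rpow (by positivity) (by linarith [sq_nonneg ‖ξ‖]) hs.le
      have hb : A * β ^ (2 * s * θ) = 1 := by
        rw [hAdef, ← Real.rpow_add hβpos]; norm_num
      calc ‖σhat ξ‖ ^ 2 = A * β ^ (2 * s * θ) * ‖σhat ξ‖ ^ 2 := by
            rw [hb, one_mul]
        _ ≤ A * ((1 + ‖ξ‖ ^ 2) ^ s * ‖σhat ξ‖ ^ 2) := by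
            rw [mul_assoc]
            exact mul_le_mul_of_nonneg_left
              (mul_le_mul_of_nonneg_right h2 (by positivity)) hA0
    calc (∫ ξ in Bᶜ, ‖σhat ξ‖ ^ 2)
        ≤ ∫ ξ in Bᶜ, A * ((1 + ‖ξ‖ ^ 2) ^ s * ‖σhat ξ‖ ^ 2) :=
          setIntegral_mono_on hf_int.integrableOn
            ((hintS.integrableOn).const_mul A) hBmeas.compl hptw
      _ = A * ∫ ξ in Bᶜ, (1 + ‖ξ‖ ^ 2) ^ s * ‖σhat ξ‖ ^ 2 :=
          integral_const_mul A _
      _ ≤ A * ∫ ξ : E3, (1 + ‖ξ‖ ^ 2) ^ s * ‖σhat ξ‖ ^ 2 := by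
          apply mul_le_mul_of_nonneg_left _ hA0
          apply setIntegral_le_integral hintS
          filter_upwards with ξ
          have h := hone ξ
          positivity
      _ ≤ A * Q ^ 2 := mul_le_mul_of_nonneg_left hsob hA0
  -- claim A : exp(-β) ρ³ ≤ A
  have hρ3 : ρ ^ 3 = β ^ (3 * θ) := by
    rw [hρdef, ← Real.rpow_natCast (β ^ θ) 3, ← Real.rpow_mul hβpos.le]
    norm_num; ring_nf
  have hclaimA : Real.exp (-β) * ρ ^ 3 ≤ A := by
    have hsum : 3 * θ + 2 * s * θ ≤ 4 := by
      have e : 3 * θ + 2 * s * θ = (12 + 8 * s) / (11 + 2 * s) := by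
        rw [hθdef]; ring
      rw [e, div_le_iff₀ h11]; linarith
    have hb4 : β ^ (3 * θ + 2 * s * θ) ≤ β ^ (4:ℕ) := by
      rw [← Real.rpow_natCast β 4]
      exact Real.rpow_le_rpow_of_exponent_le hβ1 (by push_cast; linarith)
    have hAA : Real.exp (-β) * β ^ (3 * θ + 2 * s * θ) ≤ 1 := by
      have h1 : Real.exp (-β) * β ^ (3 * θ + 2 * s * θ)
          ≤ Real.exp (-β) * Real.exp β :=
        mul_le_mul_of_nonneg_left (hb4.trans (pow4_le_exp hβ120))
          (Real.exp_pos _).le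
      rwa [← Real.exp_add, neg_add_cancel, Real.exp_zero] at h1
    have e2 : β ^ (3 * θ) = A * β ^ (3 * θ + 2 * s * θ) := by
      rw [hAdef, ← Real.rpow_add hβpos]; ring_nf
    rw [hρ3, e2]
    calc Real.exp (-β) * (A * β ^ (3 * θ + 2 * s * θ))
        = A * (Real.exp (-β) * β ^ (3 * θ + 2 * s * θ)) := by ring
      _ ≤ A * 1 := mul_le_mul_of_nonneg_left hAA hA0
      _ = A := mul_one A
  -- claim B : ρ¹¹ / β⁴ = A
  have hclaimB : ρ ^ 11 / β ^ 4 = A := by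
    have e1 : ρ ^ 11 = β ^ (11 * θ) := by
      rw [hρdef, ← Real.rpow_natCast (β ^ θ) 11, ← Real.rpow_mul hβpos.le]
      norm_num; ring_nf
    have e2 : (β:ℝ) ^ (4:ℕ) = β ^ ((4:ℕ):ℝ) := (Real.rpow_natCast β 4).symm
    rw [e1, e2, ← Real.rpow_sub hβpos, hAdef]
    congr 1
    rw [hθdef]; push_cast; field_simp; ring
  -- combine
  have hMsq : M ^ 2 * (ρ ^ 3 * V)
      ≤ (8 * C₀ ^ 2 * V + 32768 * C₀ ^ 2 * R' ^ 4 * V) * A := by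
    set E : ℝ := Real.exp (-(β / 2)) with hEdef
    set F : ℝ := 128 * R' ^ 2 * ρ ^ 4 / β ^ 2 with hFdef
    have hE0 : 0 ≤ E := (Real.exp_pos _).le
    have hF0 : 0 ≤ F := by positivity
    have hM2 : M ^ 2 ≤ 8 * C₀ ^ 2 * E ^ 2 + 2 * C₀ ^ 2 * F ^ 2 := by
      have key : (2 * E + F) ^ 2 ≤ 8 * E ^ 2 + 2 * F ^ 2 := by
        have expand : (2 * E + F) ^ 2 + (2 * E - F) ^ 2 = 8 * E ^ 2 + 2 * F ^ 2 := by
          ring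
        linarith [sq_nonneg (2 * E - F)]
      calc M ^ 2 = C₀ ^ 2 * (2 * E + F) ^ 2 := by rw [hMdef]; ring
        _ ≤ C₀ ^ 2 * (8 * E ^ 2 + 2 * F ^ 2) :=
          mul_le_mul_of_nonneg_left key (sq_nonneg C₀)
        _ = 8 * C₀ ^ 2 * E ^ 2 + 2 * C₀ ^ 2 * F ^ 2 := by ring
    have hE2 : E ^ 2 = Real.exp (-β) := by
      rw [hEdef, pow_two, ← Real.exp_add]; congr 1; ring
    have hF2 : F ^ 2 * ρ ^ 3 = 16384 * R' ^ 4 * (ρ ^ 11 / β ^ 4) := by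
      rw [hFdef]; field_simp; ring
    calc M ^ 2 * (ρ ^ 3 * V)
        ≤ (8 * C₀ ^ 2 * E ^ 2 + 2 * C₀ ^ 2 * F ^ 2) * (ρ ^ 3 * V) := by
          apply mul_le_mul_of_nonneg_right hM2 (by positivity)
      _ = 8 * C₀ ^ 2 * V * (E ^ 2 * ρ ^ 3)
          + 2 * C₀ ^ 2 * V * (F ^ 2 * ρ ^ 3) := by ring
      _ ≤ 8 * C₀ ^ 2 * V * A + 2 * C₀ ^ 2 * V * (16384 * R' ^ 4 * A) := by
          have h1 : E ^ 2 * ρ ^ 3 ≤ A := by rw [hE2]; exact hclaimA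
          have h2 : F ^ 2 * ρ ^ 3 = 16384 * R' ^ 4 * A := by
            rw [hF2, hclaimB]
          rw [h2]
          have := mul_le_mul_of_nonneg_left h1
            (by positivity : (0:ℝ) ≤ 8 * C₀ ^ 2 * V)
          linarith
      _ = (8 * C₀ ^ 2 * V + 32768 * C₀ ^ 2 * R' ^ 4 * V) * A := by ring
  have htotal : (∫ ξ : E3, ‖σhat ξ‖ ^ 2) ≤ K * A := by
    rw [hsplit, hKdef]
    have := le_trans hlow hMsq
    linarith [hhigh]
  -- conclude
  have hσint : (∫ x : E3, (σ x) ^ 2) ≤ K / (2 * Real.pi) ^ 3 * A := by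
    have h2pi : (0:ℝ) < (2 * Real.pi) ^ 3 := by positivity
    rw [div_mul_eq_mul_div, le_div_iff₀ h2pi]
    calc (∫ x : E3, (σ x) ^ 2) * (2 * Real.pi) ^ 3
        = ∫ ξ : E3, ‖σhat ξ‖ ^ 2 := by rw [hplanch]; ring
      _ ≤ K * A := htotal
  have hAeq : Real.sqrt A = β ^ (-(s * θ)) := by
    have e : A = (β ^ (-(s * θ))) ^ 2 := by
      rw [hAdef, ← Real.rpow_natCast (β ^ (-(s * θ))) 2,
        ← Real.rpow_mul hβpos.le]
      norm_num; ring_nf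
    rw [e, Real.sqrt_sq (Real.rpow_nonneg hβpos.le _)]
  have hexpeq : -(4 * s / (11 + 2 * s)) = -(s * θ) := by
    rw [hθdef]; ring
  calc Real.sqrt (∫ x : E3, (σ x) ^ 2)
      ≤ Real.sqrt (K / (2 * Real.pi) ^ 3 * A) := Real.sqrt_le_sqrt hσint
    _ = Real.sqrt (K / (2 * Real.pi) ^ 3) * Real.sqrt A :=
        Real.sqrt_mul (by positivity) A
    _ = Real.sqrt (K / (2 * Real.pi) ^ 3) * β ^ (-(4 * s / (11 + 2 * s))) := by
        rw [hAeq, hexpeq]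

end
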